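/- (Basic estimate implies commutator inequality, polynomial version) In ℂⁿ, with p_1,…,p_n constant-coefficient polynomial differential operators and p_j^* the conjugate-coefficient multiplication operators, suppose there exists C > 0 such that ‖u‖² ≤ C · Σ_{j,k=1}^n ([p_k, p_j^*] u_j, u_k) for every (1,0)-form u = Σ u_j dz_j with polynomial components, where (·,·) is the L²(ℂⁿ, e^{−|z|²}dλ) inner product and ‖u‖² = Σ_j ‖u_j‖². Then ‖u‖² ≤ C (‖Du‖² + ‖D*u‖²) for every such polynomial form u, where ‖Du‖² = Σ_{j<k}‖p_j(u_k) − p_k(u_j)‖² and ‖D*u‖² = ‖Σ_j p_j^* u_j‖². -/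

import Mathlib

open MeasureTheory MvPolynomial

open Real Set

open MeasureTheory Real Set

lemma pow_le_exp_factorial (t : ℝ) (ht : 0 ≤ t) (m : ℕ) : t ^ m ≤ m.factorial * Real.exp t := by
  have h := Real.sum_le_exp_of_nonneg ht (m + 1)
  have h2 : t ^ m / m.factorial ≤ Real.exp t := by
    refine le_trans ?_ h
    exact Finset.single_le_sum (f := fun i => t ^ i / i.factorial)
      (fun i _ => by positivity) (Finset.self_mem_range_succ m)
  have hm : (0:ℝ) < m.factorial := by positivity
  calc t ^ m = (t ^ m / m.factorial) * m.factorial := by field_simp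
  _ ≤ Real.exp t * m.factorial := mul_le_mul_of_nonneg_right h2 hm.le
  _ = m.factorial * Real.exp t := by ring

lemma integrable_exp_half : Integrable (fun z : ℂ => Real.exp (-(‖z‖ ^ 2) / 2)) := by
  rw [← MeasurePreserving.integrable_comp_emb
    Complex.volume_preserving_equiv_real_prod.symm
    Complex.measurableEquivRealProd.symm.measurableEmbedding]
  have : ((fun z : ℂ => Real.exp (-(‖z‖ ^ 2) / 2)) ∘ Complex.measurableEquivRealProd.symm) =
      fun p : ℝ × ℝ => Real.exp (-(1/2) * p.1 ^ 2) * Real.exp (-(1/2) * p.2 ^ 2) := by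
    funext p
    simp only [Function.comp_apply, Complex.measurableEquivRealProd_symm_apply]
    rw [← Real.exp_add]
    congr 1
    rw [Complex.sq_norm, Complex.normSq_mk]
    ring
  rw [this]
  exact (integrable_exp_neg_mul_sq (by norm_num : (0:ℝ) < 1/2)).mul_prod
    (integrable_exp_neg_mul_sq (by norm_num : (0:ℝ) < 1/2))

lemma int1 (a b : ℕ) : Integrable (fun z : ℂ =>
    z ^ a * (starRingEnd ℂ) z ^ b * (Real.exp (-(‖z‖ ^ 2)) : ℝ)) := by
  set C : ℝ := (a + b).factorial * Real.exp (1/2) with hc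
  have hC : 0 ≤ C := by positivity
  refine Integrable.mono (integrable_exp_half.const_mul C) ?_ ?_
  · apply Continuous.aestronglyMeasurable
    continuity
  · refine Filter.Eventually.of_forall fun z => ?_
    have h1 : ‖z ^ a * (starRingEnd ℂ) z ^ b * ((Real.exp (-(‖z‖ ^ 2)) : ℝ) : ℂ)‖
        = ‖z‖ ^ (a + b) * Real.exp (-(‖z‖ ^ 2)) := by
      rw [norm_mul, norm_mul, norm_pow, norm_pow, RingHomIsometric.norm_map,
        Complex.norm_real, Real.norm_of_nonneg (Real.exp_pos _).le, pow_add]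
    rw [h1]
    have h2 : ‖z‖ ^ (a + b) ≤ (a + b).factorial * Real.exp ((1 + ‖z‖ ^ 2) / 2) := by
      refine le_trans (pow_le_exp_factorial _ (norm_nonneg z) _) ?_
      have : ‖z‖ ≤ (1 + ‖z‖ ^ 2) / 2 := by nlinarith [sq_nonneg (‖z‖ - 1)]
      exact mul_le_mul_of_nonneg_left (Real.exp_le_exp.mpr this) (by positivity)
    have h3 : ‖C * Real.exp (-(‖z‖ ^ 2) / 2)‖ = C * Real.exp (-(‖z‖ ^ 2) / 2) := by
      rw [Real.norm_of_nonneg (by positivity)]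
    rw [h3]
    calc ‖z‖ ^ (a + b) * Real.exp (-(‖z‖ ^ 2))
        ≤ ((a + b).factorial * Real.exp ((1 + ‖z‖ ^ 2) / 2)) * Real.exp (-(‖z‖ ^ 2)) :=
          mul_le_mul_of_nonneg_right h2 (Real.exp_pos _).le
      _ = C * Real.exp (-(‖z‖ ^ 2) / 2) := by
          rw [hc, mul_assoc, mul_assoc, ← Real.exp_add, ← Real.exp_add]
          ring_nf

lemma val1 (a b : ℕ) : ∫ z : ℂ, z ^ a * (starRingEnd ℂ) z ^ b * (Real.exp (-(‖z‖ ^ 2)) : ℝ)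
    = if a = b then ((π * a.factorial : ℝ) : ℂ) else 0 := by
  rw [← Complex.integral_comp_polarCoord_symm, polarCoord_target]
  have key : ∀ p ∈ Ioi (0:ℝ) ×ˢ Ioo (-π) π,
      p.1 • ((Complex.polarCoord.symm p) ^ a *
        (starRingEnd ℂ) (Complex.polarCoord.symm p) ^ b *
        ((Real.exp (-(‖Complex.polarCoord.symm p‖ ^ 2)) : ℝ) : ℂ)) =
      (((p.1 ^ (a + b + 1) * Real.exp (-(p.1 ^ 2)) : ℝ)) : ℂ) *
        Complex.exp (((a : ℂ) - b) * p.2 * Complex.I) := by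
    intro p hp
    have hp1 : 0 < p.1 := hp.1
    have hnorm : ‖Complex.polarCoord.symm p‖ = p.1 := by
      rw [Complex.norm_polarCoord_symm, abs_of_pos hp1]
    have hz : Complex.polarCoord.symm p = (p.1 : ℂ) * Complex.exp (p.2 * Complex.I) := by
      rw [Complex.polarCoord_symm_apply, Complex.exp_mul_I]; push_cast; ring
    rw [hnorm, hz]
    rw [map_mul, Complex.conj_ofReal, ← Complex.exp_conj, map_mul, Complex.conj_ofReal,
      Complex.conj_I]
    rw [mul_pow, mul_pow, ← Complex.exp_nat_mul, ← Complex.exp_nat_mul]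
    have hexp : Complex.exp ((a : ℂ) * (p.2 * Complex.I)) *
        Complex.exp ((b : ℂ) * (p.2 * -Complex.I)) =
        Complex.exp (((a : ℂ) - b) * p.2 * Complex.I) := by
      rw [← Complex.exp_add]; congr 1; ring
    rw [Complex.real_smul]
    calc (p.1 : ℂ) * ((p.1 : ℂ) ^ a * Complex.exp ((a : ℂ) * (p.2 * Complex.I)) *
          ((p.1 : ℂ) ^ b * Complex.exp ((b : ℂ) * (p.2 * -Complex.I))) *
          ((Real.exp (-(p.1 ^ 2)) : ℝ) : ℂ))
        = ((p.1 : ℂ) ^ (a + b + 1) * ((Real.exp (-(p.1 ^ 2)) : ℝ) : ℂ)) *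
          (Complex.exp ((a : ℂ) * (p.2 * Complex.I)) *
           Complex.exp ((b : ℂ) * (p.2 * -Complex.I))) := by ring
      _ = _ := by rw [hexp]; push_cast; ring
  rw [setIntegral_congr_fun (measurableSet_Ioi.prod measurableSet_Ioo) key]
  rw [Measure.volume_eq_prod, setIntegral_prod_mul (fun r : ℝ => (((r ^ (a + b + 1) * Real.exp (-(r ^ 2)) : ℝ)) : ℂ)) (fun θ : ℝ => Complex.exp (((a : ℂ) - b) * θ * Complex.I))]
  have hrad : (∫ r in Ioi (0:ℝ), (((r ^ (a + b + 1) * Real.exp (-(r ^ 2)) : ℝ)) : ℂ))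
      = ((Real.Gamma (((a:ℝ) + b + 2) / 2) / 2 : ℝ) : ℂ) := by
    rw [show (∫ r in Ioi (0:ℝ), (((r ^ (a + b + 1) * Real.exp (-(r ^ 2)) : ℝ)) : ℂ))
        = (((∫ r in Ioi (0:ℝ), r ^ (a + b + 1) * Real.exp (-(r ^ 2)) : ℝ)) : ℂ) from
      integral_ofReal]
    congr 1
    have h1 : ∀ r ∈ Ioi (0:ℝ), r ^ (a + b + 1) * Real.exp (-(r ^ 2))
        = r ^ ((a + b + 1 : ℕ) : ℝ) * Real.exp (-(r ^ (2:ℝ))) := by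
      intro r hr
      rw [rpow_natCast, show ((2:ℝ)) = ((2:ℕ):ℝ) by norm_num, rpow_natCast]
    rw [setIntegral_congr_fun measurableSet_Ioi h1,
      integral_rpow_mul_exp_neg_rpow (by norm_num)
        (by push_cast; linarith [Nat.cast_nonneg (α := ℝ) a, Nat.cast_nonneg (α := ℝ) b])]
    push_cast
    ring_nf
  by_cases hab : a = b
  · subst hab
    simp only [sub_self, zero_mul, Complex.exp_zero, if_pos rfl]
    rw [integral_const, hrad]
    rw [Measure.real, Measure.restrict_apply_univ, Real.volume_Ioo]
    rw [ENNReal.toReal_ofReal (by linarith [pi_pos] : (0:ℝ) ≤ π - -π)]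
    have hg : Real.Gamma (((a:ℝ) + a + 2) / 2) = a.factorial := by
      have : ((a:ℝ) + a + 2) / 2 = (a : ℝ) + 1 := by ring
      rw [this, Real.Gamma_nat_eq_factorial]
    rw [hg, Complex.real_smul]
    push_cast
    ring
  · rw [if_neg hab]
    have hang : (∫ θ in Ioo (-π) π, Complex.exp (((a : ℂ) - b) * θ * Complex.I)) = 0 := by
      have hc : ((a : ℂ) - b) * Complex.I ≠ 0 := by
        apply mul_ne_zero _ Complex.I_ne_zero
        exact sub_ne_zero.mpr (by exact_mod_cast hab)
      rw [← integral_Ioc_eq_integral_Ioo,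
        ← intervalIntegral.integral_of_le (by linarith [pi_pos] : -π ≤ π)]
      have h2 : ∀ θ : ℝ, Complex.exp (((a : ℂ) - b) * θ * Complex.I)
          = Complex.exp ((((a : ℂ) - b) * Complex.I) * θ) := by
        intro θ; congr 1; ring
      simp_rw [h2]
      rw [integral_exp_mul_complex hc]
      have h4 : Complex.exp (((a:ℂ) - b) * Complex.I * (π : ℝ))
          = Complex.exp (((a:ℂ) - b) * Complex.I * ((-π : ℝ) : ℝ)) := by
        have h3 : ((a : ℂ) - b) * Complex.I * (π : ℝ)
            = ((a : ℂ) - b) * Complex.I * ((-π : ℝ) : ℝ)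
              + (((a : ℤ) - (b : ℤ) : ℤ) : ℂ) * (2 * (π : ℝ) * Complex.I) := by
          push_cast; ring
        rw [h3, Complex.exp_add, Complex.exp_int_mul_two_pi_mul_I, mul_one]
      rw [h4, sub_self, zero_div]
    rw [hang, mul_zero]

open MvPolynomial


/-- The iterated partial derivative ∂^d of a polynomial in n variables. -/
noncomputable def iterD {n : ℕ} (d : Fin n →₀ ℕ) (u : MvPolynomial (Fin n) ℂ) :
    MvPolynomial (Fin n) ℂ :=
  (List.finRange n).foldr (fun i v => (pderiv i)^[d i] v) u

/-- The constant-coefficient polynomial differential operator q(∂) applied to u. -/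
noncomputable def applyDn {n : ℕ} (q u : MvPolynomial (Fin n) ℂ) :
    MvPolynomial (Fin n) ℂ :=
  ∑ d ∈ q.support, q.coeff d • iterD d u

/-- The polynomial with complex-conjugated coefficients. -/
noncomputable def conjn {n : ℕ} (q : MvPolynomial (Fin n) ℂ) : MvPolynomial (Fin n) ℂ :=
  MvPolynomial.map (starRingEnd ℂ) q

/-- Weighted L² square norm ∫ |v|² e^{-|z|²} dλ, as a real number. -/
noncomputable def Nr {n : ℕ} (v : MvPolynomial (Fin n) ℂ) : ℝ :=
  ∫ z : Fin n → ℂ, Complex.normSq (eval z v) * Real.exp (-∑ i, ‖z i‖ ^ 2)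

noncomputable def Gf {n : ℕ} (f g : MvPolynomial (Fin n) ℂ) (z : Fin n → ℂ) : ℂ :=
  eval z f * (starRingEnd ℂ) (eval z g) * ((Real.exp (-∑ i, ‖z i‖ ^ 2) : ℝ) : ℂ)

noncomputable def Bf {n : ℕ} (f g : MvPolynomial (Fin n) ℂ) : ℂ :=
  ∫ z : Fin n → ℂ, Gf f g z

noncomputable def Kd {n : ℕ} (α : Fin n →₀ ℕ) : ℝ := ∏ i, (π * (α i).factorial)

variable {n : ℕ}

lemma Gf_mono (α β : Fin n →₀ ℕ) (c c' : ℂ) (z : Fin n → ℂ) :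
    Gf (monomial α c) (monomial β c') z = (c * (starRingEnd ℂ) c') *
      ∏ i, ((z i) ^ (α i) * (starRingEnd ℂ) (z i) ^ (β i) *
        ((Real.exp (-(‖z i‖ ^ 2)) : ℝ) : ℂ)) := by
  unfold Gf
  rw [eval_monomial, eval_monomial, Finsupp.prod_pow, Finsupp.prod_pow]
  have hw : ((Real.exp (-∑ i, ‖z i‖ ^ 2) : ℝ) : ℂ)
      = ∏ i, ((Real.exp (-(‖z i‖ ^ 2)) : ℝ) : ℂ) := by
    rw [← Complex.ofReal_prod, ← Real.exp_sum]
    congr 1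
    rw [← Finset.sum_neg_distrib]
  rw [hw, map_mul, map_prod]
  simp_rw [map_pow]
  rw [Finset.prod_mul_distrib, Finset.prod_mul_distrib]
  ring

lemma intGf_mono (α β : Fin n →₀ ℕ) (c c' : ℂ) :
    Integrable (Gf (monomial α c) (monomial β c')) := by
  have : Gf (monomial α c) (monomial β c') = fun z => (c * (starRingEnd ℂ) c') *
      ∏ i, ((z i) ^ (α i) * (starRingEnd ℂ) (z i) ^ (β i) *
        ((Real.exp (-(‖z i‖ ^ 2)) : ℝ) : ℂ)) := funext fun z => Gf_mono α β c c' z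
  rw [this]
  exact (Integrable.fintype_prod (f := fun i (z : ℂ) =>
    z ^ (α i) * (starRingEnd ℂ) z ^ (β i) * ((Real.exp (-(‖z‖ ^ 2)) : ℝ) : ℂ))
    (fun i => int1 (α i) (β i))).const_mul _

lemma Bf_mono (α β : Fin n →₀ ℕ) (c c' : ℂ) :
    Bf (monomial α c) (monomial β c') = (c * (starRingEnd ℂ) c') *
      (if α = β then ((Kd α : ℝ) : ℂ) else 0) := by
  unfold Bf
  simp_rw [Gf_mono α β c c', ← smul_eq_mul (a := c * (starRingEnd ℂ) c'), integral_smul]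
  rw [integral_fintype_prod_volume_eq_prod (f := fun i (z : ℂ) =>
    z ^ (α i) * (starRingEnd ℂ) z ^ (β i) * ((Real.exp (-(‖z‖ ^ 2)) : ℝ) : ℂ))]
  simp_rw [val1, smul_eq_mul]
  congr 1
  by_cases h : α = β
  · subst h
    simp only [if_pos rfl, Kd]
    rw [Complex.ofReal_prod]
    exact Finset.prod_congr rfl fun i _ => by simp
  · rw [if_neg h]
    obtain ⟨i, hi⟩ : ∃ i, α i ≠ β i := by
      by_contra hc; push_neg at hc; exact h (Finsupp.ext hc)
    exact Finset.prod_eq_zero (Finset.mem_univ i) (by rw [if_neg hi])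

lemma Gf_expand (f g : MvPolynomial (Fin n) ℂ) (z : Fin n → ℂ) :
    Gf f g z = ∑ α ∈ f.support, ∑ β ∈ g.support,
      Gf (monomial α (f.coeff α)) (monomial β (g.coeff β)) z := by
  unfold Gf
  rw [show eval z f = ∑ α ∈ f.support, eval z (monomial α (f.coeff α)) by
      rw [← map_sum]; exact congrArg _ (as_sum f),
    show (starRingEnd ℂ) (eval z g)
        = ∑ β ∈ g.support, (starRingEnd ℂ) (eval z (monomial β (g.coeff β))) by
      rw [← map_sum, ← map_sum]; exact congrArg _ (congrArg _ (as_sum g)),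
    Finset.sum_mul_sum, Finset.sum_mul]
  exact Finset.sum_congr rfl fun α _ => by rw [Finset.sum_mul]

lemma intGf (f g : MvPolynomial (Fin n) ℂ) : Integrable (Gf f g) := by
  rw [show Gf f g = fun z => ∑ α ∈ f.support, ∑ β ∈ g.support,
      Gf (monomial α (f.coeff α)) (monomial β (g.coeff β)) z from funext (Gf_expand f g)]
  exact integrable_finset_sum _ fun α _ => integrable_finset_sum _ fun β _ => intGf_mono _ _ _ _

lemma Bf_add_left (f f' g : MvPolynomial (Fin n) ℂ) : Bf (f + f') g = Bf f g + Bf f' g := by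
  unfold Bf
  rw [← integral_add (intGf f g) (intGf f' g)]
  congr 1; funext z; unfold Gf
  rw [map_add]; ring

lemma Bf_smul_left (c : ℂ) (f g : MvPolynomial (Fin n) ℂ) : Bf (c • f) g = c * Bf f g := by
  unfold Bf
  rw [← smul_eq_mul, ← integral_smul]
  congr 1; funext z; unfold Gf
  rw [smul_eval, smul_eq_mul]; ring

lemma Bf_zero_left (g : MvPolynomial (Fin n) ℂ) : Bf 0 g = 0 := by
  have : Gf (0 : MvPolynomial (Fin n) ℂ) g = fun _ => 0 := by
    funext z; unfold Gf; rw [map_zero]; ring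
  unfold Bf; rw [this, integral_zero]

lemma Bf_sub_left (f f' g : MvPolynomial (Fin n) ℂ) : Bf (f - f') g = Bf f g - Bf f' g := by
  have : f - f' = f + (-1 : ℂ) • f' := by rw [neg_one_smul]; ring
  rw [this, Bf_add_left, Bf_smul_left]; ring

lemma Bf_sum_left {ι : Type*} (s : Finset ι) (F : ι → MvPolynomial (Fin n) ℂ)
    (g : MvPolynomial (Fin n) ℂ) : Bf (∑ i ∈ s, F i) g = ∑ i ∈ s, Bf (F i) g := by
  classical
  induction s using Finset.induction_on with
  | empty => simpa using Bf_zero_left g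
  | @insert _ _ h ih => rw [Finset.sum_insert h, Finset.sum_insert h, Bf_add_left, ih]

lemma Bf_conj (f g : MvPolynomial (Fin n) ℂ) : (starRingEnd ℂ) (Bf f g) = Bf g f := by
  unfold Bf
  rw [← integral_conj]
  congr 1; funext z; unfold Gf
  rw [map_mul, map_mul, Complex.conj_conj, Complex.conj_ofReal]; ring

lemma Bf_add_right (f g g' : MvPolynomial (Fin n) ℂ) : Bf f (g + g') = Bf f g + Bf f g' := by
  rw [← Bf_conj, Bf_add_left, map_add, Bf_conj, Bf_conj]

lemma Bf_smul_right (c : ℂ) (f g : MvPolynomial (Fin n) ℂ) :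
    Bf f (c • g) = (starRingEnd ℂ) c * Bf f g := by
  rw [← Bf_conj, Bf_smul_left, map_mul, Bf_conj]

lemma Bf_sum_right {ι : Type*} (s : Finset ι) (f : MvPolynomial (Fin n) ℂ)
    (F : ι → MvPolynomial (Fin n) ℂ) : Bf f (∑ i ∈ s, F i) = ∑ i ∈ s, Bf f (F i) := by
  rw [← Bf_conj, Bf_sum_left, map_sum]
  exact Finset.sum_congr rfl fun i _ => Bf_conj _ _

lemma Bf_self (v : MvPolynomial (Fin n) ℂ) : Bf v v = ((Nr v : ℝ) : ℂ) := by
  unfold Bf Nr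
  have : Gf v v = fun z => (((Complex.normSq (eval z v) *
      Real.exp (-∑ i, ‖z i‖ ^ 2) : ℝ)) : ℂ) := by
    funext z; unfold Gf
    rw [Complex.mul_conj]; push_cast; ring
  rw [this]
  exact integral_ofReal

lemma Nr_eq (v : MvPolynomial (Fin n) ℂ) : Nr v = (Bf v v).re := by
  rw [Bf_self]; simp

lemma Nr_nonneg (v : MvPolynomial (Fin n) ℂ) : 0 ≤ Nr v :=
  integral_nonneg fun z => mul_nonneg (Complex.normSq_nonneg _) (Real.exp_pos _).le

lemma pderiv_iterate (i : Fin n) (m : ℕ) (α : Fin n →₀ ℕ) (c : ℂ) :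
    (pderiv i)^[m] (monomial α c)
      = monomial (α - Finsupp.single i m) (c * ((α i).descFactorial m : ℂ)) := by
  induction m with
  | zero => simp
  | succ m ih =>
    rw [Function.iterate_succ_apply', ih, pderiv_monomial]
    have h1 : (α - Finsupp.single i m) i = α i - m := by
      rw [Finsupp.tsub_apply, Finsupp.single_eq_same]
    have h2 : α - Finsupp.single i m - Finsupp.single i 1 = α - Finsupp.single i (m + 1) := by
      rw [tsub_tsub, ← Finsupp.single_add]
    rw [h1, h2]
    congr 1
    rw [Nat.descFactorial_succ]
    push_cast
    ring

lemma foldr_pderiv (d : Fin n →₀ ℕ) (α : Fin n →₀ ℕ) (c : ℂ) :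
    ∀ l : List (Fin n), l.Nodup →
      l.foldr (fun i v => (pderiv i)^[d i] v) (monomial α c)
        = monomial (α - ∑ i ∈ l.toFinset, Finsupp.single i (d i))
            (c * ∏ i ∈ l.toFinset, ((α i).descFactorial (d i) : ℂ)) := by
  intro l
  induction l with
  | nil => intro _; simp
  | cons i l ih =>
    intro hnd
    rw [List.nodup_cons] at hnd
    obtain ⟨hi, hl⟩ := hnd
    have hi' : i ∉ l.toFinset := fun hm => hi (List.mem_toFinset.mp hm)
    rw [List.foldr_cons, ih hl, pderiv_iterate]
    have hS : (α - ∑ j ∈ l.toFinset, Finsupp.single j (d j)) i = α i := by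
      rw [Finsupp.tsub_apply]
      have : (∑ j ∈ l.toFinset, Finsupp.single j (d j)) i = 0 := by
        rw [Finset.sum_apply']
        exact Finset.sum_eq_zero fun j hj =>
          Finsupp.single_eq_of_ne (fun h => hi' (h ▸ hj))
      rw [this, Nat.sub_zero]
    rw [hS, List.toFinset_cons, Finset.sum_insert hi', Finset.prod_insert hi']
    rw [tsub_tsub]
    congr 1
    · rw [add_comm]
    · ring

lemma sum_single_univ (d : Fin n →₀ ℕ) : ∑ i : Fin n, Finsupp.single i (d i) = d := by
  ext j
  rw [Finset.sum_apply']
  simp [Finsupp.single_apply]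

lemma iterD_monomial (d α : Fin n →₀ ℕ) (c : ℂ) :
    iterD d (monomial α c) = monomial (α - d) (c * ∏ i, ((α i).descFactorial (d i) : ℂ)) := by
  unfold iterD
  rw [foldr_pderiv d α c (List.finRange n) (List.nodup_finRange n), List.toFinset_finRange,
    sum_single_univ]

lemma Badj_mono (d α β : Fin n →₀ ℕ) (c c' : ℂ) :
    Bf (iterD d (monomial α c)) (monomial β c')
      = Bf (monomial α c) (monomial d 1 * monomial β c') := by
  rw [iterD_monomial, monomial_mul, Bf_mono, Bf_mono, one_mul]
  by_cases h : α = d + β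
  · have h2 : α - d = β := by rw [h]; exact add_tsub_cancel_left d β
    rw [if_pos h2, if_pos h, h2]
    have hKd : (∏ i, (((α i).descFactorial (d i) : ℂ))) * ((Kd β : ℝ) : ℂ) = ((Kd α : ℝ) : ℂ) := by
      unfold Kd
      rw [Complex.ofReal_prod, Complex.ofReal_prod, ← Finset.prod_mul_distrib]
      refine Finset.prod_congr rfl fun i _ => ?_
      have hαi : α i = d i + β i := by rw [h]; rfl
      have hfac : (β i).factorial * (α i).descFactorial (d i) = (α i).factorial := by
        have hle : d i ≤ α i := by rw [hαi]; exact Nat.le_add_right _ _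
        have := Nat.factorial_mul_descFactorial hle
        rwa [show α i - d i = β i by rw [hαi]; exact Nat.add_sub_cancel_left _ _] at this
      push_cast [← hfac]
      ring
    rw [← hKd]
    ring
  · rw [if_neg h]
    by_cases h2 : α - d = β
    · rw [if_pos h2]
      have hnle : ¬ d ≤ α := fun hle => h (by rw [← h2, add_tsub_cancel_of_le hle])
      obtain ⟨i, hi⟩ : ∃ i, α i < d i := by
        by_contra hc; push_neg at hc
        exact hnle (Finsupp.le_def.mpr hc)
      have : (∏ i, (((α i).descFactorial (d i) : ℂ))) = 0 :=
        Finset.prod_eq_zero (Finset.mem_univ i)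
          (by rw [Nat.descFactorial_eq_zero_iff_lt.mpr hi, Nat.cast_zero])
      rw [this]
      ring
    · rw [if_neg h2]
      ring

lemma pderiv_iterate_sum (i : Fin n) (m : ℕ) {ι : Type*} (s : Finset ι)
    (F : ι → MvPolynomial (Fin n) ℂ) :
    (pderiv i)^[m] (∑ j ∈ s, F j) = ∑ j ∈ s, (pderiv i)^[m] (F j) := by
  induction m generalizing F with
  | zero => simp
  | succ m ih =>
    rw [Function.iterate_succ_apply, map_sum (pderiv i) F s]
    exact ih fun j => pderiv i (F j)

lemma iterD_sum (d : Fin n →₀ ℕ) {ι : Type*} (s : Finset ι)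
    (F : ι → MvPolynomial (Fin n) ℂ) :
    iterD d (∑ j ∈ s, F j) = ∑ j ∈ s, iterD d (F j) := by
  unfold iterD
  induction List.finRange n with
  | nil => simp
  | cons i l ih =>
    simp only [List.foldr_cons]
    rw [ih, pderiv_iterate_sum]

lemma Badj_iter (d : Fin n →₀ ℕ) (f g : MvPolynomial (Fin n) ℂ) :
    Bf (iterD d f) g = Bf f (monomial d 1 * g) := by
  conv_lhs => rw [f.as_sum, iterD_sum, Bf_sum_left]
  conv_rhs => rw [f.as_sum, Bf_sum_left]
  refine Finset.sum_congr rfl fun α _ => ?_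
  conv_lhs => rw [g.as_sum, Bf_sum_right]
  conv_rhs => rw [g.as_sum, Finset.mul_sum, Bf_sum_right]
  exact Finset.sum_congr rfl fun β _ => Badj_mono d α β _ _

lemma conjn_as_sum (q : MvPolynomial (Fin n) ℂ) :
    conjn q = ∑ d ∈ q.support, monomial d ((starRingEnd ℂ) (q.coeff d)) := by
  unfold conjn
  conv_lhs => rw [q.as_sum]
  rw [map_sum]
  exact Finset.sum_congr rfl fun d _ => by rw [map_monomial]

lemma Badj (q f g : MvPolynomial (Fin n) ℂ) :
    Bf (applyDn q f) g = Bf f (conjn q * g) := by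
  unfold applyDn
  rw [Bf_sum_left, conjn_as_sum, Finset.sum_mul, Bf_sum_right]
  refine Finset.sum_congr rfl fun d _ => ?_
  rw [Bf_smul_left, Badj_iter]
  have : monomial d ((starRingEnd ℂ) (q.coeff d)) * g
      = (starRingEnd ℂ) (q.coeff d) • (monomial d 1 * g) := by
    rw [← smul_mul_assoc]
    congr 1
    rw [smul_monomial, smul_eq_mul, mul_one]
  rw [this, Bf_smul_right, Complex.conj_conj]

lemma Bf_sub_right (f g g' : MvPolynomial (Fin n) ℂ) : Bf f (g - g') = Bf f g - Bf f g' := by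
  rw [← Bf_conj, Bf_sub_left, map_sub, Bf_conj, Bf_conj]

lemma sum_split (f : Fin n → Fin n → ℝ) :
    ∑ j, ∑ k, f j k = (∑ j, ∑ k, if j < k then f j k else 0)
      + (∑ j, ∑ k, if j < k then f k j else 0) + ∑ j, f j j := by
  have h1 : ∀ j k, f j k = (if j < k then f j k else 0) + (if k < j then f j k else 0)
      + (if j = k then f j k else 0) := by
    intro j k
    rcases lt_trichotomy j k with h|h|h
    · simp [h, asymm h, h.ne]
    · subst h; simp
    · simp [h, asymm h, h.ne']
  calc ∑ j, ∑ k, f j k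
      = ∑ j, ∑ k, ((if j < k then f j k else 0) + (if k < j then f j k else 0)
        + (if j = k then f j k else 0)) :=
        Finset.sum_congr rfl fun j _ => Finset.sum_congr rfl fun k _ => h1 j k
    _ = _ := by
        simp_rw [Finset.sum_add_distrib]
        congr 1
        congr 1
        · rw [Finset.sum_comm]
        · exact Finset.sum_congr rfl fun j _ => by simp


/-- Basic estimate from the commutator inequality (polynomial version):
if ‖u‖² ≤ C Σ_{j,k} ([p_k,p_j^*]u_j,u_k) for all polynomial (1,0)-forms u, then
‖u‖² ≤ C (‖Du‖² + ‖D^*u‖²) for all such forms. -/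
theorem stmt18 (n : ℕ) (p : Fin n → MvPolynomial (Fin n) ℂ) (C : ℝ) (hC : 0 < C)
    (hyp : ∀ u : Fin n → MvPolynomial (Fin n) ℂ,
      (∑ j : Fin n, Nr (u j)) ≤
        C * (∑ j : Fin n, ∑ k : Fin n,
          ∫ z : Fin n → ℂ,
            eval z (applyDn (p k) (conjn (p j) * u j) -
                conjn (p j) * applyDn (p k) (u j)) *
              (starRingEnd ℂ) (eval z (u k)) *
              ((Real.exp (-∑ i, ‖z i‖ ^ 2) : ℝ) : ℂ)).re)
    (u : Fin n → MvPolynomial (Fin n) ℂ) :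
    (∑ j : Fin n, Nr (u j)) ≤
      C * ((∑ j : Fin n, ∑ k : Fin n,
          if j < k then Nr (applyDn (p j) (u k) - applyDn (p k) (u j)) else 0) +
        Nr (∑ j : Fin n, conjn (p j) * u j)) := by
  refine le_trans (hyp u) ?_
  refine mul_le_mul_of_nonneg_left ?_ hC.le
  have hint : ∀ j k : Fin n, (∫ z : Fin n → ℂ,
      eval z (applyDn (p k) (conjn (p j) * u j) - conjn (p j) * applyDn (p k) (u j)) *
        (starRingEnd ℂ) (eval z (u k)) * ((Real.exp (-∑ i, ‖z i‖ ^ 2) : ℝ) : ℂ)) =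
      Bf (applyDn (p k) (conjn (p j) * u j) - conjn (p j) * applyDn (p k) (u j)) (u k) :=
    fun j k => rfl
  set mR : Fin n → Fin n → ℝ :=
    fun j k => (Bf (applyDn (p k) (u j)) (applyDn (p j) (u k))).re with hmR
  set eR : Fin n → Fin n → ℝ :=
    fun j k => (Bf (conjn (p j) * u j) (conjn (p k) * u k)).re with heR
  have hcomm : ∀ j k : Fin n,
      Bf (applyDn (p k) (conjn (p j) * u j) - conjn (p j) * applyDn (p k) (u j)) (u k)
        = Bf (conjn (p j) * u j) (conjn (p k) * u k)
          - Bf (applyDn (p k) (u j)) (applyDn (p j) (u k)) := by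
    intro j k
    rw [Bf_sub_left]
    congr 1
    · exact Badj (p k) (conjn (p j) * u j) (u k)
    · calc Bf (conjn (p j) * applyDn (p k) (u j)) (u k)
          = (starRingEnd ℂ) (Bf (u k) (conjn (p j) * applyDn (p k) (u j))) :=
            (Bf_conj _ _).symm
        _ = (starRingEnd ℂ) (Bf (applyDn (p j) (u k)) (applyDn (p k) (u j))) := by
            rw [← Badj]
        _ = Bf (applyDn (p k) (u j)) (applyDn (p j) (u k)) := Bf_conj _ _
  have hLHS : (∑ j : Fin n, ∑ k : Fin n, (∫ z : Fin n → ℂ,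
      eval z (applyDn (p k) (conjn (p j) * u j) - conjn (p j) * applyDn (p k) (u j)) *
        (starRingEnd ℂ) (eval z (u k)) * ((Real.exp (-∑ i, ‖z i‖ ^ 2) : ℝ) : ℂ)).re)
      = ∑ j : Fin n, ∑ k : Fin n, (eR j k - mR j k) := by
    refine Finset.sum_congr rfl fun j _ => Finset.sum_congr rfl fun k _ => ?_
    rw [hint j k, hcomm j k, Complex.sub_re]
  simp only [Complex.re_sum]
  rw [hLHS]
  have hNrS : Nr (∑ j : Fin n, conjn (p j) * u j) = ∑ j : Fin n, ∑ k : Fin n, eR j k := by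
    rw [Nr_eq, Bf_sum_left]
    rw [Complex.re_sum]
    refine Finset.sum_congr rfl fun j _ => ?_
    rw [Bf_sum_right, Complex.re_sum]
  rw [hNrS]
  have hdiff : ∀ j k : Fin n, Nr (applyDn (p j) (u k) - applyDn (p k) (u j))
      = Nr (applyDn (p j) (u k)) + Nr (applyDn (p k) (u j)) - mR k j - mR j k := by
    intro j k
    rw [Nr_eq, Bf_sub_left, Bf_sub_right, Bf_sub_right, Nr_eq, Nr_eq]
    simp only [Complex.sub_re, hmR]
    ring
  have hT1 : (∑ j : Fin n, ∑ k : Fin n,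
      if j < k then Nr (applyDn (p j) (u k) - applyDn (p k) (u j)) else 0)
      = (∑ j : Fin n, ∑ k : Fin n, if j < k then Nr (applyDn (p j) (u k)) else 0)
        + (∑ j : Fin n, ∑ k : Fin n, if j < k then Nr (applyDn (p k) (u j)) else 0)
        - (∑ j : Fin n, ∑ k : Fin n, if j < k then mR k j else 0)
        - (∑ j : Fin n, ∑ k : Fin n, if j < k then mR j k else 0) := by
    have hpt : ∀ j k : Fin n,
        (if j < k then Nr (applyDn (p j) (u k) - applyDn (p k) (u j)) else 0)
          = (if j < k then Nr (applyDn (p j) (u k)) else 0)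
            + (if j < k then Nr (applyDn (p k) (u j)) else 0)
            - (if j < k then mR k j else 0) - (if j < k then mR j k else 0) := by
      intro j k
      split_ifs with h
      · rw [hdiff j k]
      · ring
    simp_rw [hpt, Finset.sum_sub_distrib, Finset.sum_add_distrib]
  rw [hT1]
  have hsplit := sum_split mR
  have hdiag : ∀ j : Fin n, mR j j = Nr (applyDn (p j) (u j)) := fun j => (Nr_eq _).symm
  have h1 : 0 ≤ ∑ j : Fin n, ∑ k : Fin n, if j < k then Nr (applyDn (p j) (u k)) else 0 :=
    Finset.sum_nonneg fun j _ => Finset.sum_nonneg fun k _ => by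
      split_ifs; exacts [Nr_nonneg _, le_refl 0]
  have h2 : 0 ≤ ∑ j : Fin n, ∑ k : Fin n, if j < k then Nr (applyDn (p k) (u j)) else 0 :=
    Finset.sum_nonneg fun j _ => Finset.sum_nonneg fun k _ => by
      split_ifs; exacts [Nr_nonneg _, le_refl 0]
  have h3 : 0 ≤ ∑ j : Fin n, mR j j := Finset.sum_nonneg fun j _ => by
    rw [hdiag]; exact Nr_nonneg _
  have hsub : ∑ j : Fin n, ∑ k : Fin n, (eR j k - mR j k)
      = (∑ j : Fin n, ∑ k : Fin n, eR j k) - ∑ j : Fin n, ∑ k : Fin n, mR j k := by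
    simp_rw [Finset.sum_sub_distrib]
  rw [hsub]
  linarith [hsplit]
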